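/- Let n, k, τ ≥ 1 be integers and let 𝒮 be a finite family of τ-element subsets of {1,…,n}. For a subfamily N ⊆ 𝒮 and ℓ ∈ {1,…,n}, let u_ℓ(N) = |{S ∈ N : ℓ ∈ S}|. Then there exists a subfamily N ⊆ 𝒮 with |N| = k and ∑_{ℓ=1}^n log(1 + u_ℓ(N)) ≥ τ · k · log 2 if and only if there exists a subfamily I ⊆ 𝒮 with |I| = k whose members are pairwise disjoint. Moreover, when such a pairwise disjoint subfamily I exists, it satisfies ∑_{ℓ=1}^n log(1 + u_ℓ(I)) = τ · k · log 2. -/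

import Mathlib

open Finset

lemma two_pow_aux (m : ℕ) (hm : 2 ≤ m) : m + 2 ≤ 2 ^ m := by
  induction m with
  | zero => omega
  | succ p ih =>
    rcases Nat.lt_or_ge p 2 with h | h
    · interval_cases p
      · omega
      · norm_num
    · have := ih h
      rw [pow_succ]
      omega

lemma log_le_aux (m : ℕ) : Real.log (1 + m) ≤ m * Real.log 2 := by
  have h : (1 + m : ℝ) ≤ (2 : ℝ) ^ m := by
    have := Nat.lt_two_pow_self (n := m)
    have : (1 + m : ℕ) ≤ 2 ^ m := by omega
    exact_mod_cast this
  calc Real.log (1 + m) ≤ Real.log ((2 : ℝ) ^ m) := by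
        apply Real.log_le_log (by positivity) h
    _ = m * Real.log 2 := by rw [Real.log_pow]

lemma log_lt_aux (m : ℕ) (hm : 2 ≤ m) : Real.log (1 + m) < m * Real.log 2 := by
  have h : (1 + m : ℝ) < (2 : ℝ) ^ m := by
    have := two_pow_aux m hm
    have : (1 + m : ℕ) < 2 ^ m := by omega
    exact_mod_cast this
  calc Real.log (1 + m) < Real.log ((2 : ℝ) ^ m) := Real.log_lt_log (by positivity) h
    _ = m * Real.log 2 := by rw [Real.log_pow]

lemma log_eq_aux (m : ℕ) (hm : m ≤ 1) : Real.log (1 + m) = m * Real.log 2 := by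
  interval_cases m <;> simp <;> norm_num

lemma sum_count_aux {n τ k : ℕ} (N : Finset (Finset (Fin n)))
    (hcard : ∀ S ∈ N, S.card = τ) (hk : N.card = k) :
    ∑ ℓ : Fin n, (N.filter (fun S => ℓ ∈ S)).card = τ * k := by
  have h1 : ∀ ℓ : Fin n, (N.filter (fun S => ℓ ∈ S)).card
      = ∑ S ∈ N, if ℓ ∈ S then 1 else 0 := fun ℓ => Finset.card_filter _ _
  calc ∑ ℓ : Fin n, (N.filter (fun S => ℓ ∈ S)).card
      = ∑ ℓ : Fin n, ∑ S ∈ N, if ℓ ∈ S then 1 else 0 := by simp_rw [h1]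
    _ = ∑ S ∈ N, ∑ ℓ : Fin n, if ℓ ∈ S then 1 else 0 := Finset.sum_comm
    _ = ∑ S ∈ N, S.card := by
        refine Finset.sum_congr rfl fun S _ => ?_
        rw [← Finset.card_filter]
        congr 1
        exact Finset.filter_univ_mem S
    _ = ∑ S ∈ N, τ := Finset.sum_congr rfl hcard
    _ = τ * k := by rw [Finset.sum_const, hk, smul_eq_mul, Nat.mul_comm]

theorem set_packing_reduction (n k τ : ℕ) (hn : 1 ≤ n) (hk : 1 ≤ k)
    (hτ : 1 ≤ τ)
    (𝒮 : Finset (Finset (Fin n)))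
    (hτcard : ∀ S ∈ 𝒮, S.card = τ) :
    ((∃ N ⊆ 𝒮, N.card = k ∧
        ((τ : ℝ) * k) * Real.log 2 ≤
          ∑ ℓ : Fin n,
            Real.log (1 + ((N.filter (fun S => ℓ ∈ S)).card : ℝ))) ↔
      (∃ I ⊆ 𝒮, I.card = k ∧
        ∀ S ∈ I, ∀ S' ∈ I, S ≠ S' → Disjoint S S')) ∧
    (∀ I ⊆ 𝒮, I.card = k → (∀ S ∈ I, ∀ S' ∈ I, S ≠ S' → Disjoint S S') →
      ∑ ℓ : Fin n, Real.log (1 + ((I.filter (fun S => ℓ ∈ S)).card : ℝ)) =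
        ((τ : ℝ) * k) * Real.log 2) := by
  have hpart2 : ∀ I ⊆ 𝒮, I.card = k → (∀ S ∈ I, ∀ S' ∈ I, S ≠ S' → Disjoint S S') →
      ∑ ℓ : Fin n, Real.log (1 + ((I.filter (fun S => ℓ ∈ S)).card : ℝ)) =
        ((τ : ℝ) * k) * Real.log 2 := by
    intro I hIS hIk hdisj
    have hall : ∀ ℓ : Fin n, (I.filter (fun S => ℓ ∈ S)).card ≤ 1 := by
      intro ℓ
      by_contra h
      push_neg at h
      obtain ⟨a, ha, b, hb, hab⟩ := Finset.one_lt_card.mp h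
      rw [Finset.mem_filter] at ha hb
      exact absurd (hdisj a ha.1 b hb.1 hab) (by
        rw [Finset.not_disjoint_iff]; exact ⟨ℓ, ha.2, hb.2⟩)
    have hsum : ∑ ℓ : Fin n, ((I.filter (fun S => ℓ ∈ S)).card : ℝ) = (τ : ℝ) * k := by
      have := sum_count_aux I (fun S hS => hτcard S (hIS hS)) hIk
      calc ∑ ℓ : Fin n, ((I.filter (fun S => ℓ ∈ S)).card : ℝ)
          = ((∑ ℓ : Fin n, (I.filter (fun S => ℓ ∈ S)).card : ℕ) : ℝ) := by push_cast; rfl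
        _ = ((τ * k : ℕ) : ℝ) := by rw [this]
        _ = (τ : ℝ) * k := by push_cast; ring
    calc ∑ ℓ : Fin n, Real.log (1 + ((I.filter (fun S => ℓ ∈ S)).card : ℝ))
        = ∑ ℓ : Fin n, ((I.filter (fun S => ℓ ∈ S)).card : ℝ) * Real.log 2 :=
          Finset.sum_congr rfl fun ℓ _ => log_eq_aux _ (hall ℓ)
      _ = (∑ ℓ : Fin n, ((I.filter (fun S => ℓ ∈ S)).card : ℝ)) * Real.log 2 :=
          (Finset.sum_mul _ _ _).symm
      _ = ((τ : ℝ) * k) * Real.log 2 := by rw [hsum]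
  refine ⟨⟨?_, ?_⟩, hpart2⟩
  · rintro ⟨N, hNS, hNk, hge⟩
    refine ⟨N, hNS, hNk, ?_⟩
    have hsum : ∑ ℓ : Fin n, ((N.filter (fun S => ℓ ∈ S)).card : ℝ) = (τ : ℝ) * k := by
      have := sum_count_aux N (fun S hS => hτcard S (hNS hS)) hNk
      calc ∑ ℓ : Fin n, ((N.filter (fun S => ℓ ∈ S)).card : ℝ)
          = ((∑ ℓ : Fin n, (N.filter (fun S => ℓ ∈ S)).card : ℕ) : ℝ) := by push_cast; rfl
        _ = ((τ * k : ℕ) : ℝ) := by rw [this]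
        _ = (τ : ℝ) * k := by push_cast; ring
    have hall : ∀ ℓ : Fin n, (N.filter (fun S => ℓ ∈ S)).card ≤ 1 := by
      by_contra h
      push_neg at h
      obtain ⟨ℓ₀, hℓ₀⟩ := h
      have hlt : ∑ ℓ : Fin n, Real.log (1 + ((N.filter (fun S => ℓ ∈ S)).card : ℝ))
          < ∑ ℓ : Fin n, ((N.filter (fun S => ℓ ∈ S)).card : ℝ) * Real.log 2 :=
        Finset.sum_lt_sum (fun i _ => log_le_aux _)
          ⟨ℓ₀, Finset.mem_univ _, log_lt_aux _ hℓ₀⟩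
      rw [← Finset.sum_mul, hsum] at hlt
      linarith
    intro S hS S' hS' hne
    rw [Finset.disjoint_left]
    intro ℓ hℓ hℓ'
    have hsub : ({S, S'} : Finset (Finset (Fin n))) ⊆ N.filter (fun T => ℓ ∈ T) := by
      intro T hT
      rw [Finset.mem_insert, Finset.mem_singleton] at hT
      rcases hT with rfl | rfl <;> rw [Finset.mem_filter] <;> exact ⟨by assumption, by assumption⟩
    have h2 : 2 ≤ (N.filter (fun T => ℓ ∈ T)).card := by
      calc 2 = ({S, S'} : Finset (Finset (Fin n))).card := (Finset.card_pair hne).symm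
        _ ≤ _ := Finset.card_le_card hsub
    have := hall ℓ
    omega
  · rintro ⟨I, hIS, hIk, hdisj⟩
    exact ⟨I, hIS, hIk, le_of_eq (hpart2 I hIS hIk hdisj).symm⟩
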